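/- Let X and Y be standard Borel spaces, x ↦ νˣ a Borel family of finite measures on Y, and suppose f assigns to each x ∈ X a class f(x) ∈ L¹(νˣ) such that x ↦ f(x)νˣ is Borel as a measure-valued map. Then there is a Borel function F : X × Y → ℂ such that for every x, F(x,·) is νˣ-integrable and represents the class f(x); moreover F can be chosen so that whenever f(x) ∈ L∞(νˣ), F(x,·) is bounded pointwise by ‖f(x)‖_∞, and so that F(x,·) = F(x',·) (everywhere) whenever νˣ = ν^{x'} and f(x) = f(x'). -/

import Mathlib

open MeasureTheory Filter Topology Set

namespace BorelSelAux

variable {Y : Type*} [MeasurableSpace Y]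

/-- level-`n` dyadic index of a point, relative to an embedding `e : Y → ℝ`. -/
noncomputable def jdx (e : Y → ℝ) (n : ℕ) (y : Y) : ℤ := ⌊(2 : ℝ) ^ n * e y⌋

/-- level-`n` dyadic piece. -/
def P (e : Y → ℝ) (n : ℕ) (k : ℤ) : Set Y := jdx e n ⁻¹' {k}

lemma measurable_jdx {e : Y → ℝ} (he : Measurable e) (n : ℕ) : Measurable (jdx e n) :=
  ((measurable_const.mul he)).floor

lemma measurableSet_P {e : Y → ℝ} (he : Measurable e) (n : ℕ) (k : ℤ) :
    MeasurableSet (P e n k) :=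
  measurable_jdx he n (measurableSet_singleton k)

lemma pairwise_disjoint_P (e : Y → ℝ) (n : ℕ) :
    Pairwise (Function.onFun Disjoint fun k => P e n k) := by
  intro k k' hkk'
  refine Set.disjoint_left.2 fun y hy hy' => hkk' ?_
  simp only [P, Set.mem_preimage, Set.mem_singleton_iff] at hy hy'
  rw [← hy, ← hy']

lemma iUnion_P (e : Y → ℝ) (n : ℕ) : (⋃ k, P e n k) = Set.univ := by
  ext y; simp [P]

lemma mem_P_iff {e : Y → ℝ} {n : ℕ} {k : ℤ} {y : Y} : y ∈ P e n k ↔ jdx e n y = k :=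
  Iff.rfl

/-- the filtration of dyadic σ-algebras. -/
noncomputable def ff (e : Y → ℝ) (n : ℕ) : MeasurableSpace Y :=
  MeasurableSpace.comap (jdx e n) ⊤

lemma ff_le {e : Y → ℝ} (he : Measurable e) (n : ℕ) : ff e n ≤ ‹MeasurableSpace Y› := by
  rw [ff]
  exact MeasurableSpace.comap_le_iff_le_map.2 fun s _ => (measurable_jdx he n) trivial

lemma jdx_succ (e : Y → ℝ) (n : ℕ) (y : Y) :
    jdx e n y = ⌊((jdx e (n + 1) y : ℤ) : ℝ) / 2⌋ := by
  set t : ℝ := e y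
  have h1 : ((jdx e n y : ℤ) : ℝ) ≤ (2 : ℝ) ^ n * t := Int.floor_le _
  have h2 : (2 : ℝ) ^ n * t < (jdx e n y : ℤ) + 1 := Int.lt_floor_add_one _
  have key1 : ((2 * jdx e n y : ℤ) : ℝ) ≤ (2 : ℝ) ^ (n + 1) * t := by
    push_cast; rw [pow_succ]; nlinarith
  have key2 : (2 : ℝ) ^ (n + 1) * t < ((2 * jdx e n y + 2 : ℤ) : ℝ) := by
    push_cast; rw [pow_succ]; nlinarith
  have hle : (2 * jdx e n y : ℤ) ≤ jdx e (n + 1) y := Int.le_floor.2 key1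
  have hlt : jdx e (n + 1) y < 2 * jdx e n y + 2 := Int.floor_lt.2 key2
  symm
  rw [Int.floor_eq_iff]
  constructor
  · have : ((2 * jdx e n y : ℤ) : ℝ) ≤ ((jdx e (n + 1) y : ℤ) : ℝ) := by exact_mod_cast hle
    push_cast at this ⊢
    linarith
  · have : ((jdx e (n + 1) y : ℤ) : ℝ) < ((2 * jdx e n y + 2 : ℤ) : ℝ) := by exact_mod_cast hlt
    push_cast at this ⊢
    linarith

lemma ff_mono (e : Y → ℝ) (n : ℕ) : ff e n ≤ ff e (n + 1) := by
  have h : jdx e n = (fun m : ℤ => ⌊(m : ℝ) / 2⌋) ∘ jdx e (n + 1) :=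
    funext fun y => jdx_succ e n y
  rw [ff, h, ← MeasurableSpace.comap_comp]
  exact MeasurableSpace.comap_mono le_top

lemma iSup_ff {e : Y → ℝ} (he : MeasurableEmbedding e) :
    (⨆ n, ff e n) = ‹MeasurableSpace Y› := by
  refine le_antisymm (iSup_le fun n => ff_le he.measurable n) ?_
  have hY : ‹MeasurableSpace Y› = MeasurableSpace.comap e (borel ℝ) := by
    rw [← BorelSpace.measurable_eq (α := ℝ)]
    exact he.comap_eq.symm
  rw [hY, borel_eq_generateFrom_Iio, MeasurableSpace.comap_generateFrom]
  refine MeasurableSpace.generateFrom_le ?_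
  rintro t ⟨s, ⟨b, rfl⟩, rfl⟩
  have hset : e ⁻¹' Set.Iio b =
      ⋃ n, jdx e n ⁻¹' {k : ℤ | ((k : ℝ) + 1) ≤ (2 : ℝ) ^ n * b} := by
    ext y
    simp only [Set.mem_preimage, Set.mem_Iio, Set.mem_iUnion, Set.mem_setOf_eq]
    constructor
    · intro h
      obtain ⟨n, hn⟩ := pow_unbounded_of_one_lt (b - e y)⁻¹ (by norm_num : (1:ℝ) < 2)
      refine ⟨n, ?_⟩
      have hpos : (0 : ℝ) < b - e y := by linarith
      have h1 : (1 : ℝ) < (b - e y) * 2 ^ n := by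
        calc (1 : ℝ) = (b - e y) * (b - e y)⁻¹ := (mul_inv_cancel₀ hpos.ne').symm
        _ < (b - e y) * 2 ^ n := by exact mul_lt_mul_of_pos_left hn hpos
      have h2 : ((jdx e n y : ℤ) : ℝ) ≤ (2 : ℝ) ^ n * e y := Int.floor_le _
      nlinarith
    · rintro ⟨n, hn⟩
      have h2 : (2 : ℝ) ^ n * e y < (jdx e n y : ℤ) + 1 := Int.lt_floor_add_one _
      have hpow : (0 : ℝ) < 2 ^ n := by positivity
      have : (2 : ℝ) ^ n * e y < 2 ^ n * b := by linarith
      exact lt_of_mul_lt_mul_left this hpow.le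
  rw [hset]
  refine MeasurableSet.iUnion fun n => ?_
  exact (le_iSup (ff e) n) _ ⟨_, trivial, rfl⟩

section Av

variable {E : Type*} [NormedAddCommGroup E] [NormedSpace ℝ E]
  [MeasurableSpace E] [BorelSpace E] [SecondCountableTopology E]

/-- value of the level-`n` average on the piece indexed by `k`. -/
noncomputable def cfun (e : Y → ℝ) (n : ℕ) (μ : Measure Y) (g : Y → E) (k : ℤ) : E :=
  if μ (P e n k) = 0 then 0 else (μ (P e n k)).toReal⁻¹ • ∫ z in P e n k, g z ∂μ

/-- level-`n` conditional average of `g`. -/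
noncomputable def av (e : Y → ℝ) (n : ℕ) (μ : Measure Y) (g : Y → E) (y : Y) : E :=
  cfun e n μ g (jdx e n y)

lemma av_eqOn (e : Y → ℝ) (n : ℕ) (μ : Measure Y) (g : Y → E) (k : ℤ) :
    Set.EqOn (av e n μ g) (fun _ => cfun e n μ g k) (P e n k) := by
  intro y hy
  simp only [av, mem_P_iff.1 hy]

lemma setIntegral_av [CompleteSpace E] {e : Y → ℝ} (he : Measurable e) (n : ℕ)
    (μ : Measure Y) [IsFiniteMeasure μ] (g : Y → E) (k : ℤ) :
    ∫ y in P e n k, av e n μ g y ∂μ = ∫ y in P e n k, g y ∂μ := by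
  rw [setIntegral_congr_fun (measurableSet_P he n k) (av_eqOn e n μ g k),
    setIntegral_const]
  by_cases h0 : μ (P e n k) = 0
  · rw [cfun, if_pos h0, smul_zero]
    rw [Measure.restrict_eq_zero.2 h0, integral_zero_measure]
  · rw [cfun, if_neg h0, measureReal_def, smul_inv_smul₀]
    exact ENNReal.toReal_ne_zero.2 ⟨h0, measure_ne_top μ _⟩

lemma norm_cfun_mul_le {e : Y → ℝ} (n : ℕ) (μ : Measure Y) [IsFiniteMeasure μ]
    (g : Y → E) (k : ℤ) :
    ‖cfun e n μ g k‖ * (μ (P e n k)).toReal ≤ ∫ y in P e n k, ‖g y‖ ∂μ := by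
  by_cases h0 : μ (P e n k) = 0
  · rw [cfun, if_pos h0, norm_zero, zero_mul]
    exact integral_nonneg fun y => norm_nonneg _
  · rw [cfun, if_neg h0, norm_smul, norm_inv, Real.norm_eq_abs,
      abs_of_nonneg ENNReal.toReal_nonneg]
    have hr : (0 : ℝ) < (μ (P e n k)).toReal :=
      ENNReal.toReal_pos h0 (measure_ne_top μ _)
    rw [mul_comm ((μ (P e n k)).toReal⁻¹) _, mul_assoc, inv_mul_cancel₀ hr.ne', mul_one]
    exact norm_integral_le_integral_norm _

lemma stronglyMeasurable_av (e : Y → ℝ) (n : ℕ) (μ : Measure Y) (g : Y → E) :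
    StronglyMeasurable[ff e n] (av e n μ g) := by
  have h1 : Measurable[ff e n] (jdx e n) :=
    measurable_iff_comap_le.2 le_rfl
  have h2 : Measurable[ff e n] (av e n μ g) := measurable_from_top.comp h1
  exact h2.stronglyMeasurable

lemma integrable_av {e : Y → ℝ} (he : Measurable e) (n : ℕ) (μ : Measure Y)
    [IsFiniteMeasure μ] {g : Y → E} (hg : Integrable g μ) :
    Integrable (av e n μ g) μ := by
  constructor
  · exact ((stronglyMeasurable_av e n μ g).mono (ff_le he n)).aestronglyMeasurable
  · show (∫⁻ a, (‖av e n μ g a‖₊ : ENNReal) ∂μ) < ⊤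
    have key : ∀ k : ℤ, ∫⁻ y in P e n k, ‖av e n μ g y‖₊ ∂μ
        ≤ ∫⁻ y in P e n k, ‖g y‖₊ ∂μ := by
      intro k
      have hcongr : ∫⁻ y in P e n k, ‖av e n μ g y‖₊ ∂μ
          = ∫⁻ _ in P e n k, (‖cfun e n μ g k‖₊ : ENNReal) ∂μ := by
        refine setLIntegral_congr_fun (measurableSet_P he n k) ?_
        intro y hy
        dsimp only
        rw [av_eqOn e n μ g k hy]
      rw [hcongr, setLIntegral_const]
      have hle := norm_cfun_mul_le (e := e) n μ g k
      have hOfReal : ENNReal.ofReal (∫ y in P e n k, ‖g y‖ ∂μ)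
          = ∫⁻ y in P e n k, ‖g y‖₊ ∂μ :=
        ofReal_integral_norm_eq_lintegral_enorm hg.integrableOn
      calc (‖cfun e n μ g k‖₊ : ENNReal) * μ (P e n k)
          = ENNReal.ofReal (‖cfun e n μ g k‖ * (μ (P e n k)).toReal) := by
            rw [ENNReal.ofReal_mul (norm_nonneg _), ofReal_norm_eq_enorm,
              ENNReal.ofReal_toReal (measure_ne_top μ _), enorm_eq_nnnorm]
        _ ≤ ENNReal.ofReal (∫ y in P e n k, ‖g y‖ ∂μ) := ENNReal.ofReal_le_ofReal hle
        _ = ∫⁻ y in P e n k, ‖g y‖₊ ∂μ := hOfReal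
    calc ∫⁻ y, ‖av e n μ g y‖₊ ∂μ
        = ∫⁻ y in ⋃ k, P e n k, ‖av e n μ g y‖₊ ∂μ := by
          rw [iUnion_P e n, Measure.restrict_univ]
      _ = ∑' k, ∫⁻ y in P e n k, ‖av e n μ g y‖₊ ∂μ :=
          lintegral_iUnion (measurableSet_P he n) (pairwise_disjoint_P e n) _
      _ ≤ ∑' k, ∫⁻ y in P e n k, ‖g y‖₊ ∂μ := ENNReal.tsum_le_tsum key
      _ = ∫⁻ y in ⋃ k, P e n k, ‖g y‖₊ ∂μ :=
          (lintegral_iUnion (measurableSet_P he n) (pairwise_disjoint_P e n) _).symm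
      _ = ∫⁻ y, ‖g y‖₊ ∂μ := by rw [iUnion_P e n, Measure.restrict_univ]
      _ < ⊤ := hg.2

lemma av_congr (e : Y → ℝ) (n : ℕ) {μ μ' : Measure Y} (hμ : μ = μ')
    {g g' : Y → E} (hg : g =ᵐ[μ] g') : av e n μ g = av e n μ' g' := by
  subst hμ
  funext y
  have : ∀ k, cfun e n μ g k = cfun e n μ g' k := by
    intro k
    by_cases h0 : μ (P e n k) = 0
    · rw [cfun, cfun, if_pos h0, if_pos h0]
    · rw [cfun, cfun, if_neg h0, if_neg h0, integral_congr_ae (ae_restrict_of_ae hg)]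
  simp only [av, this]

lemma norm_av_le {e : Y → ℝ} (n : ℕ) (μ : Measure Y) [IsFiniteMeasure μ]
    {g : Y → E} {C : ℝ} (hC0 : 0 ≤ C) (hC : ∀ᵐ y ∂μ, ‖g y‖ ≤ C) (y : Y) :
    ‖av e n μ g y‖ ≤ C := by
  rw [av]
  set k := jdx e n y
  by_cases h0 : μ (P e n k) = 0
  · rw [cfun, if_pos h0, norm_zero]; exact hC0
  · rw [cfun, if_neg h0, norm_smul, norm_inv, Real.norm_eq_abs,
      abs_of_nonneg ENNReal.toReal_nonneg]
    have hr : (0 : ℝ) < (μ (P e n k)).toReal :=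
      ENNReal.toReal_pos h0 (measure_ne_top μ _)
    have hb : ‖∫ z in P e n k, g z ∂μ‖ ≤ C * (μ (P e n k)).toReal :=
      norm_setIntegral_le_of_norm_le_const_ae (measure_lt_top μ _) (ae_restrict_of_ae hC)
    calc (μ (P e n k)).toReal⁻¹ * ‖∫ z in P e n k, g z ∂μ‖
        ≤ (μ (P e n k)).toReal⁻¹ * (C * (μ (P e n k)).toReal) :=
          mul_le_mul_of_nonneg_left hb (inv_nonneg.2 hr.le)
      _ = C := by rw [mul_comm C, ← mul_assoc, inv_mul_cancel₀ hr.ne', one_mul]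

/-- the averages equal the conditional expectations. -/
lemma av_ae_eq_condexp [CompleteSpace E] {e : Y → ℝ} (he : Measurable e) (n : ℕ)
    (μ : Measure Y) [IsFiniteMeasure μ] {g : Y → E} (hg : Integrable g μ) :
    av e n μ g =ᵐ[μ] μ[g | ff e n] := by
  have hm : ff e n ≤ ‹MeasurableSpace Y› := ff_le he n
  haveI : SigmaFinite (μ.trim hm) := by infer_instance
  refine ae_eq_condExp_of_forall_setIntegral_eq hm hg
    (fun s _ _ => (integrable_av he n μ hg).integrableOn) ?_
    (stronglyMeasurable_av e n μ g).aestronglyMeasurable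
  rintro s ⟨S, -, rfl⟩ -
  have hs : jdx e n ⁻¹' S = ⋃ k : S, P e n (k : ℤ) := by
    ext y
    simp only [Set.mem_preimage, Set.mem_iUnion, P, Set.mem_singleton_iff]
    exact ⟨fun h => ⟨⟨_, h⟩, rfl⟩, by rintro ⟨⟨k, hk⟩, h⟩; rw [show jdx e n y = k from h]; exact hk⟩
  have hmeas : ∀ k : S, MeasurableSet (P e n (k : ℤ)) := fun k => measurableSet_P he n _
  have hdisj : Pairwise (Function.onFun Disjoint fun k : S => P e n (k : ℤ)) := by
    intro k k' hkk'
    exact pairwise_disjoint_P e n (fun h => hkk' (Subtype.ext h))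
  rw [hs, integral_iUnion hmeas hdisj ((integrable_av he n μ hg).integrableOn),
    integral_iUnion hmeas hdisj hg.integrableOn]
  exact tsum_congr fun k => setIntegral_av he n μ g (k : ℤ)

end Av

/-- Almost-everywhere convergence of the dyadic averages: real scalar version. -/
lemma tendsto_av_real {e : Y → ℝ} (he : MeasurableEmbedding e) (μ : Measure Y)
    [IsFiniteMeasure μ] {g : Y → ℝ} (hg : Integrable g μ) :
    ∀ᵐ y ∂μ, Tendsto (fun n => av e n μ g y) atTop (𝓝 (g y)) := by
  set g' : Y → ℝ := hg.1.mk g with hg'def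
  have hgg' : g =ᵐ[μ] g' := hg.1.ae_eq_mk
  have hg' : Integrable g' μ := hg.congr hgg'
  have havg : ∀ n, av e n μ g = av e n μ g' := fun n => av_congr e n rfl hgg'
  set ℱ : Filtration ℕ ‹MeasurableSpace Y› :=
    ⟨ff e, monotone_nat_of_le_succ (ff_mono e), fun n => ff_le he.measurable n⟩ with hℱdef
  have hmeas : StronglyMeasurable[⨆ n, ℱ n] g' := by
    have : (⨆ n, ℱ n) = ‹MeasurableSpace Y› := iSup_ff he
    rw [this]
    exact hg.1.stronglyMeasurable_mk
  have hconv := hg'.tendsto_ae_condExp hmeas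
  have heq : ∀ n, av e n μ g' =ᵐ[μ] μ[g' | ℱ n] := fun n =>
    av_ae_eq_condexp he.measurable n μ hg'
  have heq' : ∀ᵐ y ∂μ, ∀ n, av e n μ g' y = (μ[g' | ℱ n]) y := ae_all_iff.2 heq
  filter_upwards [hconv, heq', hgg'] with y h1 h2 h3
  rw [h3]
  have : (fun n => av e n μ g y) = fun n => (μ[g' | ℱ n]) y := by
    funext n; rw [havg n, h2 n]
  rw [this]
  exact h1

/-- Almost-everywhere convergence of the dyadic averages: complex version. -/
lemma tendsto_av_complex {e : Y → ℝ} (he : MeasurableEmbedding e) (μ : Measure Y)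
    [IsFiniteMeasure μ] {g : Y → ℂ} (hg : Integrable g μ) :
    ∀ᵐ y ∂μ, Tendsto (fun n => av e n μ g y) atTop (𝓝 (g y)) := by
  have hre : ∀ n y, (av e n μ g y).re = av e n μ (fun z => (g z).re) y := by
    intro n y
    rw [av, av]
    set k := jdx e n y
    by_cases h0 : μ (P e n k) = 0
    · rw [cfun, cfun, if_pos h0, if_pos h0, Complex.zero_re]
    · rw [cfun, cfun, if_neg h0, if_neg h0, Complex.smul_re]
      congr 1
      rw [← RCLike.re_to_complex, ← integral_re hg.integrableOn]
      rfl
  have him : ∀ n y, (av e n μ g y).im = av e n μ (fun z => (g z).im) y := by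
    intro n y
    rw [av, av]
    set k := jdx e n y
    by_cases h0 : μ (P e n k) = 0
    · rw [cfun, cfun, if_pos h0, if_pos h0, Complex.zero_im]
    · rw [cfun, cfun, if_neg h0, if_neg h0, Complex.smul_im]
      congr 1
      rw [← RCLike.im_to_complex, ← integral_im hg.integrableOn]
      rfl
  filter_upwards [tendsto_av_real he μ hg.re, tendsto_av_real he μ hg.im] with y h1 h2
  have key : Tendsto (fun n => ((av e n μ (fun z => (g z).re) y : ℝ) : ℂ)
      + (av e n μ (fun z => (g z).im) y : ℝ) * Complex.I) atTop
      (𝓝 (((g y).re : ℂ) + ((g y).im : ℝ) * Complex.I)) := by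
    exact ((Complex.continuous_ofReal.tendsto _).comp h1).add
      (((Complex.continuous_ofReal.tendsto _).comp h2).mul_const _)
  have heq : (fun n => ((av e n μ (fun z => (g z).re) y : ℝ) : ℂ)
      + (av e n μ (fun z => (g z).im) y : ℝ) * Complex.I) = fun n => av e n μ g y := by
    funext n
    rw [← hre, ← him, Complex.re_add_im]
  rw [heq] at key
  rwa [Complex.re_add_im] at key

end BorelSelAux

open BorelSelAux

/-- Lemma 2.1: let `X`, `Y` be standard Borel spaces, `x ↦ νˣ` a Borel family of finite
measures on `Y`, and `f` a family of representatives with `f x ∈ L¹(νˣ)` such that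
`x ↦ f x · νˣ` is Borel (i.e. `x ↦ ∫_A f x dνˣ` is Borel for each Borel `A`).  Then there
is a Borel `F : X × Y → ℂ` with `F (x, ·)` integrable for `νˣ` and in the class of `f x`
for every `x`; moreover `F` may be chosen so that whenever `f x` is essentially bounded
by some `C ≥ 0` then `F (x, ·)` is pointwise bounded by `C`, and so that
`F (x, ·) = F (x', ·)` everywhere whenever `νˣ = ν^{x'}` and `f x = f x'` in `L¹(νˣ)`. -/
theorem borel_selection_of_L1_family {X Y : Type*}
    [MeasurableSpace X] [StandardBorelSpace X]
    [MeasurableSpace Y] [StandardBorelSpace Y]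
    (ν : X → Measure Y) (hνfin : ∀ x, IsFiniteMeasure (ν x))
    (hνmeas : ∀ A : Set Y, MeasurableSet A → Measurable fun x => ν x A)
    (f : X → Y → ℂ) (hfint : ∀ x, Integrable (f x) (ν x))
    (hfmeas : ∀ A : Set Y, MeasurableSet A →
      Measurable fun x => ∫ y in A, f x y ∂(ν x)) :
    ∃ F : X × Y → ℂ, Measurable F ∧
      (∀ x, Integrable (fun y => F (x, y)) (ν x)) ∧
      (∀ x, (fun y => F (x, y)) =ᵐ[ν x] f x) ∧
      (∀ x (C : ℝ), 0 ≤ C → (∀ᵐ y ∂(ν x), ‖f x y‖ ≤ C) → ∀ y, ‖F (x, y)‖ ≤ C) ∧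
      (∀ x x', ν x = ν x' → f x =ᵐ[ν x] f x' → ∀ y, F (x, y) = F (x', y)) := by
  classical
  haveI := hνfin
  obtain ⟨e, he⟩ := exists_measurableEmbedding_real Y
  -- the approximating sequence
  set G : ℕ → X × Y → ℂ := fun n p => av e n (ν p.1) (f p.1) p.2 with hGdef
  have hGmeas : ∀ n, Measurable (G n) := by
    intro n
    have hc : Measurable (fun q : X × ℤ => cfun e n (ν q.1) (f q.1) q.2) := by
      refine measurable_from_prod_countable_left fun k => ?_
      simp only [cfun]
      refine Measurable.ite ?_ measurable_const ?_
      · exact (hνmeas _ (measurableSet_P he.measurable n k)) (measurableSet_singleton 0)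
      · exact ((hνmeas _ (measurableSet_P he.measurable n k)).ennreal_toReal.inv).smul
          (hfmeas _ (measurableSet_P he.measurable n k))
    have hj : Measurable (fun p : X × Y => (p.1, jdx e n p.2)) :=
      measurable_fst.prodMk ((measurable_jdx he.measurable n).comp measurable_snd)
    exact hc.comp hj
  -- the limit function
  set S : Set (X × Y) := {p | ∃ L, Tendsto (fun n => G n p) atTop (𝓝 L)} with hSdef
  have hSmeas : MeasurableSet S := measurableSet_exists_tendsto hGmeas
  set F : X × Y → ℂ := fun p =>
    if h : ∃ L, Tendsto (fun n => G n p) atTop (𝓝 L) then h.choose else 0 with hFdef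
  have hFtendsto : ∀ p (h : ∃ L, Tendsto (fun n => G n p) atTop (𝓝 L)),
      Tendsto (fun n => G n p) atTop (𝓝 (F p)) := by
    intro p h
    rw [hFdef]
    simp only [dif_pos h]
    exact h.choose_spec
  have hae : ∀ x, ∀ᵐ y ∂(ν x), Tendsto (fun n => G n (x, y)) atTop (𝓝 (f x y)) := by
    intro x
    exact tendsto_av_complex he (ν x) (hfint x)
  have hFrep : ∀ x, (fun y => F (x, y)) =ᵐ[ν x] f x := by
    intro x
    filter_upwards [hae x] with y hy
    have hex : ∃ L, Tendsto (fun n => G n (x, y)) atTop (𝓝 L) := ⟨f x y, hy⟩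
    exact tendsto_nhds_unique (hFtendsto (x, y) hex) hy
  refine ⟨F, ?_, ?_, hFrep, ?_, ?_⟩
  · -- measurability
    set H : ℕ → X × Y → ℂ := fun n p => if p ∈ S then G n p else 0 with hHdef
    have hHmeas : ∀ n, Measurable (H n) := fun n =>
      Measurable.ite hSmeas (hGmeas n) measurable_const
    refine measurable_of_tendsto_metrizable' atTop hHmeas ?_
    rw [tendsto_pi_nhds]
    intro p
    by_cases hp : p ∈ S
    · have : ∀ n, H n p = G n p := fun n => if_pos hp
      simp only [this]
      exact hFtendsto p hp
    · have h1 : ∀ n, H n p = 0 := fun n => if_neg hp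
      have h2 : F p = 0 := by rw [hFdef]; exact dif_neg hp
      simp only [h1, h2]
      exact tendsto_const_nhds
  · -- integrability
    intro x
    exact (hfint x).congr (hFrep x).symm
  · -- essential bound
    intro x C hC0 hC y
    have hbound : ∀ n, ‖G n (x, y)‖ ≤ C := fun n => norm_av_le n (ν x) hC0 hC y
    by_cases hp : (x, y) ∈ S
    · exact le_of_tendsto ((hFtendsto (x, y) hp).norm) (Eventually.of_forall hbound)
    · have : F (x, y) = 0 := by rw [hFdef]; exact dif_neg hp
      rw [this, norm_zero]; exact hC0
  · -- consistency
    intro x x' hν hf y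
    have hseq : (fun n => G n (x, y)) = fun n => G n (x', y) := by
      funext n
      show av e n (ν x) (f x) y = av e n (ν x') (f x') y
      rw [av_congr e n hν hf]
    rw [hFdef]
    simp only [hseq]
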